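/- Suppose nr = (q^m−1)/s for positive integers m and s, and suppose {l_i : i ∈ Z_{n,r}} = {l, m} for a positive integer l with l < m and l ∣ m. If N_l = 1 and r ≤ 3, then 2(q−1)·δ^{(l)}_1 > q·N_m·r. -/

import Mathlib

open scoped Classical

/-- The `q`-cyclotomic coset of `i` modulo `N`, with representatives taken in `{1, …, N}`. -/
noncomputable def cosetOf (q N i : ℕ) : Finset ℕ :=
  (Finset.Icc 1 N).filter (fun x => ∃ j : ℕ, x ≡ i * q ^ j [MOD N])

/-- `Z_{n,r} = {1 + i r : 0 ≤ i ≤ n-1}`. -/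
def Zset (n r : ℕ) : Finset ℕ := (Finset.range n).image (fun i => 1 + i * r)

/-- The collection of `q`-cyclotomic cosets contained in `Z_{n,r}`. -/
noncomputable def cosetsIn (q n r : ℕ) : Finset (Finset ℕ) :=
  (Zset n r).image (fun i => cosetOf q (n * r) i)

/-- `N_l`: the number of `q`-cyclotomic cosets of size `l` contained in `Z_{n,r}`. -/
noncomputable def Ncount (q n r l : ℕ) : ℕ :=
  ((cosetsIn q n r).filter (fun C => C.card = l)).card

/-- Coset leader: the smallest element of a coset. -/
noncomputable def leader (C : Finset ℕ) : ℕ := sInf (C : Set ℕ)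

/-- The sorted (increasing) list of coset leaders of the cosets of size `l` in `Z_{n,r}`. -/
noncomputable def leaderList (q n r l : ℕ) : List ℕ :=
  Finset.sort (((cosetsIn q n r).filter (fun C => C.card = l)).image leader) (· ≤ ·)

/-- `δ_i^{(l)}`: the `i`-th smallest coset leader (1-indexed). -/
noncomputable def delta (q n r l i : ℕ) : ℕ := (leaderList q n r l).getD (i - 1) 0

/-- representative in [1, N] -/
def rep (N x : ℕ) : ℕ := if x % N = 0 then N else x % N

lemma rep_mem {N : ℕ} (hN : 0 < N) (x : ℕ) : rep N x ∈ Finset.Icc 1 N := by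
  unfold rep
  rcases eq_or_ne (x % N) 0 with h | h
  · simp only [if_pos h, Finset.mem_Icc]
    omega
  · have := Nat.mod_lt x hN
    simp only [if_neg h, Finset.mem_Icc]
    omega

lemma rep_modEq {N : ℕ} (hN : 0 < N) (x : ℕ) : rep N x ≡ x [MOD N] := by
  unfold rep
  rcases eq_or_ne (x % N) 0 with h | h
  · simp only [h, if_pos]
    show N % N = x % N
    simp [Nat.mod_self, h]
  · simp only [if_neg h]
    exact Nat.mod_modEq x N

lemma eq_rep_of {N x y : ℕ} (hN : 0 < N) (hx : x ∈ Finset.Icc 1 N)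
    (hxy : x ≡ y [MOD N]) : x = rep N y := by
  have h2 := rep_mem hN y
  have h3 : x ≡ rep N y [MOD N] := hxy.trans (rep_modEq hN y).symm
  simp only [Finset.mem_Icc] at hx h2
  rcases le_or_gt x (rep N y) with h | h
  · have hd : N ∣ rep N y - x := (Nat.modEq_iff_dvd' h).1 h3
    have := Nat.eq_zero_of_dvd_of_lt hd (by omega)
    omega
  · have hd : N ∣ x - rep N y := (Nat.modEq_iff_dvd' h.le).1 h3.symm
    have := Nat.eq_zero_of_dvd_of_lt hd (by omega)
    omega

section Coset
variable {q N : ℕ}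

lemma pow_cycle {i k : ℕ} (h : i * q ^ k ≡ i [MOD N]) (a b : ℕ) :
    i * q ^ (a * k + b) ≡ i * q ^ b [MOD N] := by
  induction a generalizing b with
  | zero => simpa using Nat.ModEq.refl (i * q ^ b)
  | succ a ih =>
    have he : (a + 1) * k + b = a * k + (k + b) := by ring
    rw [he]
    calc i * q ^ (a * k + (k + b)) ≡ i * q ^ (k + b) [MOD N] := ih (k + b)
      _ = (i * q ^ k) * q ^ b := by ring
      _ ≡ i * q ^ b [MOD N] := h.mul_right _

lemma exists_period (hqN : Nat.Coprime q N) (hN : 0 < N) (i : ℕ) :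
    ∃ k, 0 < k ∧ i * q ^ k ≡ i [MOD N] := by
  refine ⟨N.totient, Nat.totient_pos.2 hN, ?_⟩
  calc i * q ^ N.totient ≡ i * 1 [MOD N] := (Nat.ModEq.pow_totient hqN).mul_left i
    _ = i := by ring

lemma coset_symm (hqN : Nat.Coprime q N) (hN : 0 < N) {x i j : ℕ}
    (h : x ≡ i * q ^ j [MOD N]) : ∃ j', i ≡ x * q ^ j' [MOD N] := by
  obtain ⟨t, ht'⟩ : ∃ t, N.totient = t + 1 := ⟨N.totient - 1, by
    have := Nat.totient_pos.2 hN; omega⟩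
  have hcy : i * q ^ (t + 1) ≡ i [MOD N] := by
    rw [← ht']
    calc i * q ^ N.totient ≡ i * 1 [MOD N] := (Nat.ModEq.pow_totient hqN).mul_left i
      _ = i := by ring
  have h1 := pow_cycle hcy j 0
  have he : j * (t + 1) + 0 = j + j * t := by ring
  rw [he, pow_zero, mul_one] at h1
  refine ⟨j * t, ?_⟩
  calc i ≡ i * q ^ (j + j * t) [MOD N] := h1.symm
    _ = (i * q ^ j) * q ^ (j * t) := by ring
    _ ≡ x * q ^ (j * t) [MOD N] := (h.symm).mul_right _

lemma mem_cosetOf_self {i : ℕ} (hi : i ∈ Finset.Icc 1 N) : i ∈ cosetOf q N i := by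
  unfold cosetOf
  rw [Finset.mem_filter]
  exact ⟨hi, 0, by simpa using Nat.ModEq.refl i⟩

lemma cosetOf_subset_Icc {i : ℕ} : cosetOf q N i ⊆ Finset.Icc 1 N :=
  Finset.filter_subset _ _

lemma cosetOf_eq_of_mem (hqN : Nat.Coprime q N) (hN : 0 < N) {x i : ℕ}
    (hx : x ∈ cosetOf q N i) : cosetOf q N x = cosetOf q N i := by
  obtain ⟨hxI, j, hj⟩ := Finset.mem_filter.1 hx
  obtain ⟨j', hj'⟩ := coset_symm hqN hN hj
  ext y
  simp only [cosetOf, Finset.mem_filter]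
  constructor
  · rintro ⟨hy, a, ha⟩
    refine ⟨hy, j + a, ?_⟩
    calc y ≡ x * q ^ a [MOD N] := ha
      _ ≡ (i * q ^ j) * q ^ a [MOD N] := hj.mul_right _
      _ = i * q ^ (j + a) := by ring
  · rintro ⟨hy, a, ha⟩
    refine ⟨hy, j' + a, ?_⟩
    calc y ≡ i * q ^ a [MOD N] := ha
      _ ≡ (x * q ^ j') * q ^ a [MOD N] := hj'.mul_right _
      _ = x * q ^ (j' + a) := by ring

lemma card_cosetOf (hqN : Nat.Coprime q N) (hN : 0 < N) {i k : ℕ}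
    (hk : 0 < k) (hik : i * q ^ k ≡ i [MOD N])
    (hmin : ∀ k', 0 < k' → k' < k → ¬ i * q ^ k' ≡ i [MOD N]) :
    (cosetOf q N i).card = k := by
  have himg : cosetOf q N i = (Finset.range k).image (fun j => rep N (i * q ^ j)) := by
    ext x
    simp only [cosetOf, Finset.mem_filter, Finset.mem_image, Finset.mem_range]
    constructor
    · rintro ⟨hx, j, hj⟩
      refine ⟨j % k, Nat.mod_lt _ hk, ?_⟩
      have he : j = (j / k) * k + j % k := by
        rw [Nat.mul_comm (j / k) k]
        exact (Nat.div_add_mod j k).symm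
      have h2 : x ≡ i * q ^ (j % k) [MOD N] := by
        have h3 := pow_cycle hik (j / k) (j % k)
        rw [← he] at h3
        exact hj.trans h3
      exact (eq_rep_of hN hx h2).symm
    · rintro ⟨j, hjk, rfl⟩
      exact ⟨rep_mem hN _, j, rep_modEq hN _⟩
  rw [himg, Finset.card_image_of_injOn, Finset.card_range]
  have key : ∀ a b, a ∈ Finset.range k → b ∈ Finset.range k → a ≤ b →
      rep N (i * q ^ a) = rep N (i * q ^ b) → a = b := by
    intro a b ha hb hab heq
    simp only [Finset.mem_range] at ha hb
    by_contra hne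
    have hablt : a < b := lt_of_le_of_ne hab hne
    have hmod : i * q ^ a ≡ i * q ^ b [MOD N] :=
      ((rep_modEq hN (i * q ^ a)).symm.trans (heq ▸ rep_modEq hN (i * q ^ b)))
    have h4 : q ^ a * i ≡ q ^ a * (i * q ^ (b - a)) [MOD N] := by
      have : i * q ^ b = q ^ a * (i * q ^ (b - a)) := by
        rw [mul_comm (q ^ a), mul_assoc, ← pow_add]
        congr 2
        omega
      calc q ^ a * i = i * q ^ a := by ring
        _ ≡ i * q ^ b [MOD N] := hmod
        _ = q ^ a * (i * q ^ (b - a)) := this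
    have h5 : i ≡ i * q ^ (b - a) [MOD N] :=
      Nat.ModEq.cancel_left_of_coprime ((Nat.Coprime.pow_left a hqN).symm) h4
    exact hmin (b - a) (by omega) (by omega) h5.symm
  intro a ha b hb heq
  simp only [Finset.coe_range, Set.mem_Iio] at ha hb
  rcases le_total a b with h | h
  · exact key a b (Finset.mem_range.2 ha) (Finset.mem_range.2 hb) h heq
  · exact (key b a (Finset.mem_range.2 hb) (Finset.mem_range.2 ha) h heq.symm).symm

end Coset

lemma mem_Zset_iff {n r x : ℕ} (hr : 0 < r) :
    x ∈ Zset n r ↔ x ∈ Finset.Icc 1 (n * r) ∧ x ≡ 1 [MOD r] := by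
  unfold Zset
  simp only [Finset.mem_image, Finset.mem_range, Finset.mem_Icc]
  constructor
  · rintro ⟨i, hi, rfl⟩
    refine ⟨⟨by omega, ?_⟩, ?_⟩
    · have : (i + 1) * r ≤ n * r := Nat.mul_le_mul_right r (by omega)
      nlinarith
    · have : r ∣ 1 + i * r - 1 := ⟨i, by rw [Nat.mul_comm r i]; omega⟩
      exact ((Nat.modEq_iff_dvd' (by omega)).2 this).symm
  · rintro ⟨⟨hx1, hxN⟩, hmod⟩
    have hdvd : r ∣ x - 1 := (Nat.modEq_iff_dvd' hx1).1 hmod.symm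
    obtain ⟨i, hi⟩ := hdvd
    rw [Nat.mul_comm r i] at hi
    refine ⟨i, ?_, by omega⟩
    by_contra hcon
    push_neg at hcon
    have : n * r ≤ i * r := Nat.mul_le_mul_right r hcon
    omega

theorem stmt7 (q n r m s l : ℕ) (hq : IsPrimePow q) (hn : 0 < n) (hco : Nat.Coprime n q)
    (hr : 0 < r) (hrdvd : r ∣ q - 1) (hm : 0 < m) (hs : 0 < s)
    (hnrs : n * r * s = q ^ m - 1)
    (hl : 0 < l) (hlm : l < m) (hldvd : l ∣ m)
    (hset : (Zset n r).image (fun i => (cosetOf q (n * r) i).card) = {l, m})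
    (hNl : Ncount q n r l = 1) (hr3 : r ≤ 3) :
    q * Ncount q n r m * r < 2 * (q - 1) * delta q n r l 1 := by
  set N := n * r with hNdef
  have hN : 0 < N := Nat.mul_pos hn hr
  have hq2 : 2 ≤ q := hq.two_le
  have hq' : Nat.Coprime q (q - 1) := by
    have h1 : Nat.gcd q (q - 1) ∣ 1 := by
      have := Nat.dvd_sub (Nat.gcd_dvd_left q (q - 1)) (Nat.gcd_dvd_right q (q - 1))
      rwa [show q - (q - 1) = 1 by omega] at this
    exact Nat.eq_one_of_dvd_one h1
  have hqr : Nat.Coprime q r := Nat.Coprime.coprime_dvd_right hrdvd hq'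
  have hqN : Nat.Coprime q N := Nat.Coprime.mul_right hco.symm hqr
  have hrN : r ∣ N := Dvd.intro_left n rfl
  have hq1r : q ≡ 1 [MOD r] := ((Nat.modEq_iff_dvd' (by omega)).2 hrdvd).symm
  -- cosets of elements of Zset stay in Zset
  have hsub : ∀ i ∈ Zset n r, cosetOf q N i ⊆ Zset n r := by
    intro i hi x hx
    obtain ⟨hxI, j, hj⟩ := Finset.mem_filter.1 hx
    have hi1 : i ≡ 1 [MOD r] := ((mem_Zset_iff hr).1 hi).2
    have hqj : q ^ j ≡ 1 [MOD r] := by simpa using hq1r.pow j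
    have : x ≡ 1 [MOD r] := by
      calc x ≡ i * q ^ j [MOD r] := hj.of_dvd hrN
        _ ≡ 1 * 1 [MOD r] := hi1.mul hqj
        _ = 1 := by ring
    exact (mem_Zset_iff hr).2 ⟨hxI, this⟩
  -- the two possible cardinalities
  have hcard : ∀ i ∈ Zset n r, (cosetOf q N i).card = l ∨ (cosetOf q N i).card = m := by
    intro i hi
    have : (cosetOf q N i).card ∈ (Zset n r).image (fun i => (cosetOf q (n * r) i).card) :=
      Finset.mem_image.2 ⟨i, hi, rfl⟩
    rw [hset] at this
    simpa using this
  -- period facts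
  have key : ∀ x, x * q ^ (cosetOf q N x).card ≡ x [MOD N] ∧
      (∀ t, 0 < t → x * q ^ t ≡ x [MOD N] → (cosetOf q N x).card ∣ t) := by
    intro x
    have hP := exists_period hqN hN x
    set k := Nat.find hP with hkdef
    have hspec := Nat.find_spec hP
    have hcardk : (cosetOf q N x).card = k :=
      card_cosetOf hqN hN hspec.1 hspec.2
        (fun k' h1 h2 h3 => Nat.find_min hP h2 ⟨h1, h3⟩)
    constructor
    · rw [hcardk]; exact hspec.2
    · intro t ht hmod
      rw [hcardk]
      have he : t = (t / k) * k + t % k := by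
        rw [Nat.mul_comm (t / k) k]; exact (Nat.div_add_mod t k).symm
      have h3 := pow_cycle hspec.2 (t / k) (t % k)
      rw [← he] at h3
      have h4 : x * q ^ (t % k) ≡ x [MOD N] := h3.symm.trans hmod
      by_contra hdvd
      have hne : t % k ≠ 0 := fun h0 => hdvd (Nat.dvd_of_mod_eq_zero h0)
      exact Nat.find_min hP (Nat.mod_lt t hspec.1) ⟨Nat.pos_of_ne_zero hne, h4⟩
  -- partition of Zset
  have hmemZ : ∀ i ∈ Zset n r, i ∈ cosetOf q N i := by
    intro i hi
    exact mem_cosetOf_self ((mem_Zset_iff hr).1 hi).1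
  have hdisj : ∀ C₁ ∈ cosetsIn q n r, ∀ C₂ ∈ cosetsIn q n r, C₁ ≠ C₂ → Disjoint C₁ C₂ := by
    intro C₁ h1 C₂ h2 hne
    obtain ⟨i₁, hi₁, rfl⟩ := Finset.mem_image.1 h1
    obtain ⟨i₂, hi₂, rfl⟩ := Finset.mem_image.1 h2
    rw [Finset.disjoint_left]
    intro x hx1 hx2
    exact hne ((cosetOf_eq_of_mem hqN hN hx1).symm.trans (cosetOf_eq_of_mem hqN hN hx2))
  have hbi : Zset n r = (cosetsIn q n r).biUnion id := by
    ext x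
    simp only [Finset.mem_biUnion, id]
    constructor
    · intro hx
      exact ⟨cosetOf q N x, Finset.mem_image.2 ⟨x, hx, rfl⟩, hmemZ x hx⟩
    · rintro ⟨C, hC, hxC⟩
      obtain ⟨i, hi, rfl⟩ := Finset.mem_image.1 hC
      exact hsub i hi hxC
  have hZcard : (Zset n r).card = n := by
    unfold Zset
    rw [Finset.card_image_of_injective _ (fun a b hab => by
      have h2 : 1 + a * r = 1 + b * r := hab
      exact Nat.eq_of_mul_eq_mul_right hr (by omega)), Finset.card_range]
  have hsum : n = ∑ C ∈ cosetsIn q n r, C.card := by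
    conv_lhs => rw [← hZcard, hbi]
    exact Finset.card_biUnion hdisj
  have hcardC : ∀ C ∈ cosetsIn q n r, C.card = l ∨ C.card = m := by
    intro C hC
    obtain ⟨i, hi, rfl⟩ := Finset.mem_image.1 hC
    exact hcard i hi
  -- sum decomposition
  have hsplit : n = Ncount q n r l * l + Ncount q n r m * m := by
    refine hsum.trans ?_
    rw [← Finset.sum_filter_add_sum_filter_not (cosetsIn q n r) (fun C => C.card = l)]
    congr 1
    · rw [Finset.sum_congr rfl (fun C hC => (Finset.mem_filter.1 hC).2),
        Finset.sum_const, smul_eq_mul]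
      rfl
    · have hfeq : (cosetsIn q n r).filter (fun C => ¬ C.card = l)
          = (cosetsIn q n r).filter (fun C => C.card = m) := by
        apply Finset.filter_congr
        intro C hC
        rcases hcardC C hC with h | h <;> simp [h] <;> omega
      rw [hfeq, Finset.sum_congr rfl (fun C hC => (Finset.mem_filter.1 hC).2),
        Finset.sum_const, smul_eq_mul]
      rfl
  have hNm1 : 1 ≤ Ncount q n r m := by
    have hmmem : m ∈ (Zset n r).image (fun i => (cosetOf q (n * r) i).card) := by
      rw [hset]; simp
    obtain ⟨i, hi, hieq⟩ := Finset.mem_image.1 hmmem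
    have : cosetOf q N i ∈ (cosetsIn q n r).filter (fun C => C.card = m) :=
      Finset.mem_filter.2 ⟨Finset.mem_image.2 ⟨i, hi, rfl⟩, hieq⟩
    exact Finset.card_pos.2 ⟨_, this⟩
  -- the unique small coset
  obtain ⟨C₀, hC₀⟩ := Finset.card_eq_one.1 hNl
  have hC₀mem : C₀ ∈ (cosetsIn q n r).filter (fun C => C.card = l) := by
    rw [hC₀]; exact Finset.mem_singleton_self C₀
  have hC₀in : C₀ ∈ cosetsIn q n r := (Finset.mem_filter.1 hC₀mem).1
  have hC₀card : C₀.card = l := (Finset.mem_filter.1 hC₀mem).2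
  have hδeq : delta q n r l 1 = leader C₀ := by
    unfold delta leaderList
    rw [hC₀, Finset.image_singleton, Finset.sort_singleton]
    rfl
  set δ := delta q n r l 1 with hδdef
  have hC₀ne : C₀.Nonempty := Finset.card_pos.1 (by omega)
  have hδC₀ : δ ∈ C₀ := by
    rw [hδeq]
    exact Nat.sInf_mem (Finset.coe_nonempty.2 hC₀ne)
  -- the fixed-point set S
  set S := (Zset n r).filter (fun x => x * q ^ l ≡ x [MOD N]) with hSdef
  have hC₀S : C₀ ⊆ S := by
    intro x hx
    obtain ⟨i₀, hi₀, hC₀eq⟩ := Finset.mem_image.1 hC₀in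
    have hxZ : x ∈ Zset n r := hsub i₀ hi₀ (hC₀eq ▸ hx)
    have hcoeq : cosetOf q N x = C₀ := by
      rw [← hC₀eq] at hx ⊢
      exact cosetOf_eq_of_mem hqN hN hx
    have := (key x).1
    rw [hcoeq, hC₀card] at this
    exact Finset.mem_filter.2 ⟨hxZ, this⟩
  have hSC₀ : S ⊆ C₀ := by
    intro x hx
    obtain ⟨hxZ, hxmod⟩ := Finset.mem_filter.1 hx
    have hdvdl : (cosetOf q N x).card ∣ l := (key x).2 l hl hxmod
    have hcl : (cosetOf q N x).card = l := by
      rcases hcard x hxZ with h | h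
      · exact h
      · exfalso
        rw [h] at hdvdl
        have := Nat.le_of_dvd hl hdvdl
        omega
    have hxin : cosetOf q N x ∈ (cosetsIn q n r).filter (fun C => C.card = l) :=
      Finset.mem_filter.2 ⟨Finset.mem_image.2 ⟨x, hxZ, rfl⟩, hcl⟩
    rw [hC₀] at hxin
    rw [← Finset.mem_singleton.1 hxin]
    exact hmemZ x hxZ
  -- arithmetic with d, e, w
  have hql2 : 2 ≤ q ^ l := by
    calc 2 = 2 ^ 1 := by norm_num
      _ ≤ 2 ^ l := Nat.pow_le_pow_right (by norm_num) hl
      _ ≤ q ^ l := Nat.pow_le_pow_left hq2 l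
  set d := Nat.gcd N (q ^ l - 1) with hddef
  have hd0 : 0 < d := Nat.gcd_pos_of_pos_left _ hN
  have hdN : d ∣ N := Nat.gcd_dvd_left _ _
  have hdq : d ∣ q ^ l - 1 := Nat.gcd_dvd_right _ _
  set e := N / d with hedef
  have hed : e * d = N := Nat.div_mul_cancel hdN
  have he0 : 0 < e := by
    rcases Nat.eq_zero_or_pos e with h | h
    · rw [h] at hed; omega
    · exact h
  have hrd : r ∣ d := by
    apply Nat.dvd_gcd hrN
    have : q ^ l ≡ 1 [MOD r] := by simpa using hq1r.pow l
    exact (Nat.modEq_iff_dvd' (by omega)).1 this.symm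
  have hNeq : N ∣ e * (q ^ l - 1) := by
    obtain ⟨w, hw⟩ := hdq
    exact ⟨w, by rw [hw, ← hed]; ring⟩
  -- every member of S is divisible by e
  have heS : ∀ x ∈ S, e ∣ x := by
    intro x hx
    obtain ⟨hxZ, hxmod⟩ := Finset.mem_filter.1 hx
    have hxle : x ≤ x * q ^ l := Nat.le_mul_of_pos_right x (by omega)
    have hdvd : N ∣ x * (q ^ l - 1) := by
      have := (Nat.modEq_iff_dvd' hxle).1 hxmod.symm
      rwa [show x * q ^ l - x = x * (q ^ l - 1) by rw [Nat.mul_sub]; ring_nf] at this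
    obtain ⟨w, hw⟩ := hdq
    have hcop : Nat.Coprime e w := by
      have := Nat.coprime_div_gcd_div_gcd (m := N) (n := q ^ l - 1) hd0
      rwa [← hedef, ← hddef, hw, Nat.mul_div_cancel_left w hd0] at this
    have hdvd2 : e ∣ x * w := by
      have h6 : e * d ∣ (x * w) * d := by
        rw [hed]
        rwa [hw, show x * (d * w) = x * w * d by ring] at hdvd
      exact (Nat.mul_dvd_mul_iff_right hd0).1 h6
    exact hcop.dvd_of_dvd_mul_right hdvd2
  have hδS : δ ∈ S := hC₀S hδC₀
  have hδZ : δ ∈ Zset n r := (Finset.mem_filter.1 hδS).1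
  have hδ1 : 1 ≤ δ ∧ δ ≤ N := by
    have := ((mem_Zset_iff hr).1 hδZ).1
    simp only [Finset.mem_Icc] at this
    exact this
  have hδ1r : δ ≡ 1 [MOD r] := ((mem_Zset_iff hr).1 hδZ).2
  have heδ : e ∣ δ := heS δ hδS
  -- gcd(e, r) = 1
  have her : Nat.Coprime e r := by
    have h1 : Nat.gcd e r ∣ δ := dvd_trans (Nat.gcd_dvd_left e r) heδ
    have h2 : Nat.gcd e r ∣ δ - 1 := by
      refine dvd_trans (Nat.gcd_dvd_right e r) ?_
      exact (Nat.modEq_iff_dvd' hδ1.1).1 hδ1r.symm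
    have : Nat.gcd e r ∣ 1 := by
      have := Nat.dvd_sub h1 h2
      rwa [show δ - (δ - 1) = 1 by omega] at this
    exact Nat.eq_one_of_dvd_one this
  -- construct d/r distinct elements of S
  set κ := δ / e with hκdef
  have hκe : κ * e = δ := Nat.div_mul_cancel heδ
  set c := if κ % r = 0 then r else κ % r with hcdef
  have hc1 : 1 ≤ c := by
    rw [hcdef]; split <;> omega
  have hcr : c ≤ r := by
    have := Nat.mod_lt κ hr
    rw [hcdef]; split <;> omega
  have hcκ : c ≡ κ [MOD r] := by
    show c % r = κ % r
    rw [hcdef]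
    split
    · next h => rw [Nat.mod_self, h]
    · exact Nat.mod_mod_of_dvd κ dvd_rfl
  -- injection from range (d / r) into S
  have hcover : ∀ j ∈ Finset.range (d / r), (c + j * r) * e ∈ S := by
    intro j hj
    rw [Finset.mem_range] at hj
    have hjr : (j + 1) * r ≤ d := by
      have h1 : j + 1 ≤ d / r := hj
      calc (j + 1) * r ≤ (d / r) * r := Nat.mul_le_mul_right r h1
        _ = d := Nat.div_mul_cancel hrd
    have hcj : c + j * r ≤ d := by
      have h2 : c + j * r ≤ (j + 1) * r := by rw [add_mul, one_mul]; omega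
      omega
    have hfle : (c + j * r) * e ≤ N := by
      calc (c + j * r) * e ≤ d * e := Nat.mul_le_mul_right e hcj
        _ = N := by rw [← hed]; ring
    have hf1 : 1 ≤ (c + j * r) * e := Nat.mul_pos (by omega) he0
    have hmod1 : (c + j * r) * e ≡ 1 [MOD r] := by
      calc (c + j * r) * e ≡ c * e [MOD r] := Nat.ModEq.mul_right e (by
            show (c + j * r) % r = c % r
            exact Nat.add_mul_mod_self_right c j r)
        _ ≡ κ * e [MOD r] := Nat.ModEq.mul_right e hcκ
        _ = δ := hκe
        _ ≡ 1 [MOD r] := hδ1r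
    have hZ : (c + j * r) * e ∈ Zset n r :=
      (mem_Zset_iff hr).2 ⟨Finset.mem_Icc.2 ⟨hf1, hfle⟩, hmod1⟩
    have hfix : (c + j * r) * e * q ^ l ≡ (c + j * r) * e [MOD N] := by
      have hle2 : (c + j * r) * e ≤ (c + j * r) * e * q ^ l :=
        Nat.le_mul_of_pos_right _ (by omega)
      refine ((Nat.modEq_iff_dvd' hle2).2 ?_).symm
      have heq2 : (c + j * r) * e * q ^ l - (c + j * r) * e
          = (c + j * r) * (e * (q ^ l - 1)) := by
        rw [← Nat.mul_assoc, Nat.mul_sub, Nat.mul_one]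
      rw [heq2]
      exact hNeq.mul_left (c + j * r)
    exact Finset.mem_filter.2 ⟨hZ, hfix⟩
  have hinj : d / r ≤ S.card := by
    rw [← Finset.card_range (d / r)]
    apply Finset.card_le_card_of_injOn (fun j => (c + j * r) * e) (fun j hj => hcover j hj)
    intro a ha b hb hab
    simp only at hab
    have h3 := Nat.eq_of_mul_eq_mul_right he0 hab
    have h4 : a * r = b * r := by omega
    exact Nat.eq_of_mul_eq_mul_right hr h4
  have hScard : S.card ≤ l := hC₀card ▸ Finset.card_le_card hSC₀
  have hdlr : d ≤ l * r := by
    have h1 : d / r ≤ l := le_trans hinj hScard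
    calc d = (d / r) * r := (Nat.div_mul_cancel hrd).symm
      _ ≤ l * r := Nat.mul_le_mul_right r h1
  have hδe : e ≤ δ := Nat.le_of_dvd (by omega) heδ
  have hδln : n ≤ δ * l := by
    have h1 : N ≤ δ * (l * r) := by
      calc N = e * d := hed.symm
        _ ≤ e * (l * r) := Nat.mul_le_mul_left e hdlr
        _ ≤ δ * (l * r) := Nat.mul_le_mul_right _ hδe
    have h2 : n * r ≤ (δ * l) * r := by
      rw [show (δ * l) * r = δ * (l * r) by ring]
      exact h1
    exact Nat.le_of_mul_le_mul_right h2 hr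
  have hm2l : 2 * l ≤ m := by
    obtain ⟨k, hk⟩ := hldvd
    have hk2 : 2 ≤ k := by
      rcases Nat.lt_or_ge k 2 with h | h
      · interval_cases k
        · simp at hk; omega
        · simp at hk; omega
      · exact h
    calc 2 * l = l * 2 := by ring
      _ ≤ l * k := Nat.mul_le_mul_left l hk2
      _ = m := hk.symm
  have hqr4 : q * r ≤ 4 * (q - 1) := by
    have hne : r = 1 ∨ r = 2 ∨ r = 3 := by omega
    obtain ⟨t, ht⟩ := hrdvd
    rcases hne with h | h | h <;> rw [h] <;> rw [h] at ht <;> omega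
  set Nm := Ncount q n r m with hNmdef
  rw [hNl, one_mul] at hsplit
  have hfin : q * Nm * r * (l * m) < 2 * (q - 1) * δ * (l * m) := by
    calc q * Nm * r * (l * m) = (q * r * l) * (Nm * m) := by ring
      _ < (q * r * l) * n := by
        apply mul_lt_mul_of_pos_left _ (by positivity : (0:ℕ) < q * r * l)
        omega
      _ ≤ (4 * (q - 1) * l) * n := Nat.mul_le_mul_right n (Nat.mul_le_mul_right l hqr4)
      _ ≤ (2 * (q - 1) * m) * n := Nat.mul_le_mul_right n (by
            calc 4 * (q - 1) * l = 2 * (q - 1) * (2 * l) := by ring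
              _ ≤ 2 * (q - 1) * m := Nat.mul_le_mul_left _ hm2l)
      _ = (2 * (q - 1)) * (n * m) := by ring
      _ ≤ (2 * (q - 1)) * ((δ * l) * m) :=
          Nat.mul_le_mul_left _ (Nat.mul_le_mul_right m hδln)
      _ = 2 * (q - 1) * δ * (l * m) := by ring
  exact lt_of_mul_lt_mul_right hfin (Nat.zero_le _)
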